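/- For every n ≥ 5, the cycle C_n is not a 2-threshold graph. -/

import Mathlib

/-- For every n ≥ 5, Cₙ is not a 2-threshold graph. -/
theorem cn_not_two_threshold (n : ℕ) (hn : 5 ≤ n) :
    ¬ ∃ (θ₁ θ₂ : ℝ), θ₁ < θ₂ ∧ ∃ r : Fin n → ℝ, ∀ u v : Fin n, u ≠ v →
      ((SimpleGraph.cycleGraph n).Adj u v ↔ θ₁ ≤ r u + r v ∧ r u + r v < θ₂) := by
  rintro ⟨θ₁, θ₂, hθ, r, hr⟩
  obtain ⟨m, rfl⟩ : ∃ m, n = m + 5 := ⟨n - 5, by omega⟩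
  letI := Fin.instCommRing (m + 5)
  -- numeral facts
  have hnum : ∀ c : ℕ, 0 < c → c < m + 5 → (c : Fin (m + 5)) ≠ 0 := by
    intro c hc hlt h
    have := congrArg Fin.val h
    rw [Fin.val_cast_of_lt hlt] at this
    simp at this
    omega
  have h1 : (1 : Fin (m + 5)) ≠ 0 := by
    have := hnum 1 (by omega) (by omega); rwa [Nat.cast_one] at this
  have h2 : (2 : Fin (m + 5)) ≠ 0 := by
    have := hnum 2 (by omega) (by omega); rwa [Nat.cast_ofNat] at this
  have h3 : (3 : Fin (m + 5)) ≠ 0 := by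
    have := hnum 3 (by omega) (by omega); rwa [Nat.cast_ofNat] at this
  have h4 : (4 : Fin (m + 5)) ≠ 0 := by
    have := hnum 4 (by omega) (by omega); rwa [Nat.cast_ofNat] at this
  -- edges
  have edge : ∀ a : Fin (m + 5), θ₁ ≤ r a + r (a + 1) ∧ r a + r (a + 1) < θ₂ := by
    intro a
    have hne : a ≠ a + 1 := by
      intro h
      exact h1 (left_eq_add.mp h)
    have hadj : (SimpleGraph.cycleGraph (m + 5)).Adj a (a + 1) := by
      rw [SimpleGraph.cycleGraph_adj (n := m + 3)]
      right
      exact add_sub_cancel_left a 1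
    exact (hr a (a + 1) hne).mp hadj
  -- nonedge dichotomy
  have dich : ∀ a b : Fin (m + 5), a ≠ b → b - a ≠ 1 → a - b ≠ 1 →
      r a + r b < θ₁ ∨ θ₂ ≤ r a + r b := by
    intro a b hab hd1 hd2
    have hadj : ¬ (SimpleGraph.cycleGraph (m + 5)).Adj a b := by
      rw [SimpleGraph.cycleGraph_adj (n := m + 3)]
      push_neg
      exact ⟨hd2, hd1⟩
    have h : ¬ (θ₁ ≤ r a + r b ∧ r a + r b < θ₂) := fun hp => hadj ((hr a b hab).mpr hp)
    by_contra hcon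
    push_neg at hcon
    exact h ⟨hcon.1, hcon.2⟩
  -- min and max
  obtain ⟨w, hw⟩ := Finite.exists_min r
  obtain ⟨mx, hmx⟩ := Finite.exists_max r
  by_cases hk0 : mx - w = 0
  · -- mx = w; pair (w+1, w-1)
    have hmw : mx = w := by linear_combination hk0
    have d := dich (w + 1) (w - 1) (by intro h; exact h2 (by linear_combination h))
      (by intro h; exact h3 (by linear_combination -h)) (by intro h; exact h1 (by linear_combination h))
    have e1 := edge w
    have e2 := edge (w - 1)
    rw [sub_add_cancel] at e2
    rcases d with d | d
    · linarith [hw (w - 1)]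
    · have hrm : r mx = r w := by rw [hmw]
      linarith [hmx (w + 1)]
  · by_cases hk1 : mx - w = 1
    · -- mx = w + 1; pair (w-1, w+2)
      have hmw : mx = w + 1 := by linear_combination hk1
      have d := dich (w - 1) (w + 2) (by intro h; exact h3 (by linear_combination -h))
        (by intro h; exact h2 (by linear_combination h)) (by intro h; exact h4 (by linear_combination -h))
      have e1 := edge (w - 1)
      rw [sub_add_cancel] at e1
      have e2 := edge (w + 1)
      have hb : w + 1 + 1 = w + 2 := by ring
      rw [hb] at e2
      rcases d with d | d
      · linarith [hw (w + 2)]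
      · have : r mx = r (w + 1) := by rw [hmw]
        linarith [hmx (w - 1)]
    · by_cases hkm1 : w - mx = 1
      · -- mx = w - 1; pair (w+1, w-2)
        have hmw : mx = w - 1 := by linear_combination -hkm1
        have d := dich (w + 1) (w - 2) (by intro h; exact h3 (by linear_combination h))
          (by intro h; exact h4 (by linear_combination -h)) (by intro h; exact h2 (by linear_combination h))
        have e1 := edge w
        have e2 := edge (w - 2)
        have hb : w - 2 + 1 = w - 1 := by ring
        rw [hb] at e2
        rcases d with d | d
        · linarith [hw (w - 2)]
        · have : r mx = r (w - 1) := by rw [hmw]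
          linarith [hmx (w + 1)]
      · -- general case: pair (w+1, mx+1)
        have d := dich (w + 1) (mx + 1)
          (by intro h; exact hk0 (by linear_combination -h))
          (by intro h; exact hk1 (by linear_combination h))
          (by intro h; exact hkm1 (by linear_combination h))
        have e1 := edge w
        have e2 := edge mx
        rcases d with d | d
        · linarith [hw (mx + 1)]
        · linarith [hmx (w + 1)]
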